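/- Let A and H be finite groups, let H0 and G be subgroups of H, and set G0 = G ∩ H0. Assume H0 (and hence G0) acts on A on the right, and assume there exists a homomorphism i : G0 → A ⋊ G0 ≤ A ⋊ H0 splitting the projection A ⋊ G0 → G0. Then there exists an injective homomorphism j : G → A wr_{H0} H such that α(j(g)) = g for all g ∈ G (where α : A wr_{H0} H → H is the projection), j(G0) ⊆ Ind_{H0}^H(A) ⋊ H0, and π(j(σ)) = i(σ) for every σ ∈ G0, where π : Ind_{H0}^H(A) ⋊ H0 → A ⋊ H0 is the Shapiro map. -/

import Mathlib

open MulOpposite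

open scoped Classical

variable {G : Type*} [Group G] (G0 : Subgroup G) {A : Type*} [Group A]
  (act : G0ᵐᵒᵖ →* MulAut A)

def TwInd : Subgroup (G → A) where
  carrier := {f | ∀ (σ : G) (ρ : G0), f (σ * ρ) = act (op ρ) (f σ)}
  one_mem' := by intro σ ρ; simp
  mul_mem' := by
    intro f g hf hg σ ρ
    simp only [Pi.mul_apply, hf σ ρ, hg σ ρ, map_mul]
  inv_mem' := by
    intro f hf σ ρ
    simp only [Pi.inv_apply, hf σ ρ, map_inv]

def twAct : G →* MulAut (TwInd G0 act) where
  toFun σ :=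
    { toFun := fun f => ⟨fun τ => (f : G → A) (σ⁻¹ * τ), by
        intro τ ρ
        simpa [mul_assoc] using f.2 (σ⁻¹ * τ) ρ⟩
      invFun := fun f => ⟨fun τ => (f : G → A) (σ * τ), by
        intro τ ρ
        simpa [mul_assoc] using f.2 (σ * τ) ρ⟩
      left_inv := by
        intro f; ext τ; simp [mul_assoc]
      right_inv := by
        intro f; ext τ; simp [mul_assoc]
      map_mul' := by
        intro f g; ext τ; rfl }
  map_one' := by ext f τ; simp
  map_mul' := by intro σ σ'; ext f τ; simp [mul_assoc]

/-- The anti-homomorphism `x ↦ op x⁻¹`, as a homomorphism `H →* Hᵐᵒᵖ`. -/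
def invOpHom (H : Type*) [Group H] : H →* Hᵐᵒᵖ where
  toFun x := op x⁻¹
  map_one' := by simp
  map_mul' x y := by show op (x * y)⁻¹ = op x⁻¹ * op y⁻¹; rw [mul_inv_rev, op_mul]

/-- The left action of `G0` on `A` corresponding to the given right action `act`;
the semidirect product `A ⋊ G0` is `A ⋊[baseAct G0 act] G0`. -/
def baseAct : G0 →* MulAut A := act.comp (invOpHom G0)

/-- The Shapiro map `Ind_{G0}^G(A) ⋊ G0 → A ⋊ G0`, `fσ ↦ f(1)σ`, defined on the
subgroup `Ind_{G0}^G(A) ⋊ G0 = rightHom⁻¹(G0)` of the twisted wreath product. -/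
def shapiro :
    (Subgroup.comap (SemidirectProduct.rightHom :
        (TwInd G0 act ⋊[twAct G0 act] G) →* G) G0) →* A ⋊[baseAct G0 act] G0 :=
  MonoidHom.mk'
    (fun x => ⟨((x : TwInd G0 act ⋊[twAct G0 act] G).left : G → A) 1,
      ⟨SemidirectProduct.rightHom (x : TwInd G0 act ⋊[twAct G0 act] G), x.2⟩⟩)
    (by
      intro x y
      set xe := (x : TwInd G0 act ⋊[twAct G0 act] G)
      set ye := (y : TwInd G0 act ⋊[twAct G0 act] G)
      have hcoe : ((x * y : _) : TwInd G0 act ⋊[twAct G0 act] G) = xe * ye := rfl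
      apply SemidirectProduct.ext
      · show ((xe * ye).left : G → A) 1 = _
        rw [SemidirectProduct.mul_left]
        have h1 : ((xe.left * (twAct G0 act) xe.right ye.left : TwInd G0 act) : G → A) 1 =
            (xe.left : G → A) 1 * (ye.left : G → A) (xe.right⁻¹ * 1) := rfl
        rw [h1, mul_one]
        have h2 : (ye.left : G → A) (xe.right⁻¹) =
            act (op (⟨xe.right, x.2⟩ : G0)⁻¹) ((ye.left : G → A) 1) := by
          have := ye.left.2 1 (⟨xe.right, x.2⟩ : G0)⁻¹
          simpa using this
        rw [h2]
        rfl
      · rfl)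


section Aux

variable {H : Type*} [Group H] {A' : Type*} [Group A']
  (H0 G' : Subgroup H) (act' : H0ᵐᵒᵖ →* MulAut A')

/-- `τ ∈ G' H0`. -/
def AuxP (τ : H) : Prop := ∃ g ∈ G', ∃ ρ ∈ H0, g * ρ = τ

variable (r : H → H) (c : ↥(G' ⊓ H0) → A')

def auxE (g τ : H) : H := (r τ)⁻¹ * g * r (g⁻¹ * τ)

structure AuxHyp : Prop where
  hr1 : ∀ τ, (r τ)⁻¹ * τ ∈ H0
  hr2 : ∀ (τ ρ : H), ρ ∈ H0 → r (τ * ρ) = r τ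
  hr3 : ∀ τ, AuxP H0 G' τ → r τ ∈ G'
  hr4 : r 1 = 1
  hc : ∀ σ τ : ↥(G' ⊓ H0), c (σ * τ) =
    c σ * act' (op ((Subgroup.inclusion (inf_le_right : G' ⊓ H0 ≤ H0) σ))⁻¹) (c τ)

variable {H0 G' act' r c}

theorem auxP_mul_left {g : H} (hg : g ∈ G') {τ : H} (h : AuxP H0 G' τ) :
    AuxP H0 G' (g⁻¹ * τ) := by
  obtain ⟨a, ha, ρ, hρ, hh⟩ := h
  exact ⟨g⁻¹ * a, mul_mem (inv_mem hg) ha, ρ, hρ, by rw [mul_assoc, hh]⟩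

theorem auxP_mul_right {ρ : H} (hρ : ρ ∈ H0) {τ : H} (h : AuxP H0 G' τ) :
    AuxP H0 G' (τ * ρ) := by
  obtain ⟨a, ha, ρ', hρ', hh⟩ := h
  exact ⟨a, ha, ρ' * ρ, mul_mem hρ' hρ, by rw [← mul_assoc, hh]⟩

theorem AuxHyp.he0 (hA : AuxHyp H0 G' act' r c) (g τ : H) : auxE r g τ ∈ H0 := by
  have h : auxE r g τ = ((r τ)⁻¹ * τ) * ((r (g⁻¹ * τ))⁻¹ * (g⁻¹ * τ))⁻¹ := by
    unfold auxE; group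
  rw [h]
  exact mul_mem (hA.hr1 τ) (inv_mem (hA.hr1 _))

theorem AuxHyp.heMem (hA : AuxHyp H0 G' act' r c) {g : H} (hg : g ∈ G') {τ : H}
    (h : AuxP H0 G' τ) : auxE r g τ ∈ G' ⊓ H0 := by
  refine Subgroup.mem_inf.mpr ⟨?_, hA.he0 g τ⟩
  have h1 : r τ ∈ G' := hA.hr3 τ h
  have h2 : r (g⁻¹ * τ) ∈ G' := hA.hr3 _ (auxP_mul_left hg h)
  exact mul_mem (mul_mem (inv_mem h1) hg) h2

noncomputable def auxB (hA : AuxHyp H0 G' act' r c) (g : ↥G') (τ : H) : A' :=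
  if h : AuxP H0 G' τ then c ⟨auxE r (↑g) τ, hA.heMem g.2 h⟩ else 1

noncomputable def auxPsi (hA : AuxHyp H0 G' act' r c) (g : ↥G') (τ : H) : A' :=
  act' (op ⟨(r τ)⁻¹ * τ, hA.hr1 τ⟩) (auxB hA g τ)

theorem auxE_mul_right (g : H) (τ : H) {ρ : H} (hρ : ρ ∈ H0)
    (hA : AuxHyp H0 G' act' r c) : auxE r g (τ * ρ) = auxE r g τ := by
  unfold auxE
  have h1 : g⁻¹ * (τ * ρ) = (g⁻¹ * τ) * ρ := (mul_assoc _ _ _).symm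
  rw [hA.hr2 τ ρ hρ, h1, hA.hr2 _ ρ hρ]

theorem auxB_mul_right (hA : AuxHyp H0 G' act' r c) (g : ↥G') (τ : H) {ρ : H}
    (hρ : ρ ∈ H0) : auxB hA g (τ * ρ) = auxB hA g τ := by
  unfold auxB
  by_cases h : AuxP H0 G' τ
  · rw [dif_pos h, dif_pos (auxP_mul_right hρ h)]
    congr 1
    exact Subtype.ext (auxE_mul_right (↑g) τ hρ hA)
  · have h' : ¬ AuxP H0 G' (τ * ρ) := by
      intro hh
      apply h
      have := auxP_mul_right (inv_mem hρ) hh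
      simpa [mul_assoc] using this
    rw [dif_neg h, dif_neg h']

theorem auxPsi_equiv (hA : AuxHyp H0 G' act' r c) (g : ↥G') (σ : H) (ρ : ↥H0) :
    auxPsi hA g (σ * ↑ρ) = act' (op ρ) (auxPsi hA g σ) := by
  unfold auxPsi
  rw [auxB_mul_right hA g σ ρ.2]
  have hx : (⟨(r (σ * ↑ρ))⁻¹ * (σ * ↑ρ), hA.hr1 _⟩ : ↥H0) =
      ⟨(r σ)⁻¹ * σ, hA.hr1 σ⟩ * ρ := by
    apply Subtype.ext
    show (r (σ * ↑ρ))⁻¹ * (σ * ↑ρ) = (r σ)⁻¹ * σ * ↑ρ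
    rw [hA.hr2 σ (↑ρ) ρ.2, mul_assoc]
  rw [hx, op_mul, map_mul]
  rfl

theorem auxPsi_mul (hA : AuxHyp H0 G' act' r c) (g g' : ↥G') (τ : H) :
    auxPsi hA (g * g') τ = auxPsi hA g τ * auxPsi hA g' ((↑g)⁻¹ * τ) := by
  by_cases h : AuxP H0 G' τ
  · have h' : AuxP H0 G' ((↑g : H)⁻¹ * τ) := auxP_mul_left g.2 h
    have he : auxE r (↑(g * g') : H) τ = auxE r (↑g) τ * auxE r (↑g') ((↑g : H)⁻¹ * τ) := by
      show auxE r ((↑g : H) * ↑g') τ = _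
      unfold auxE
      rw [mul_inv_rev, mul_assoc (↑g' : H)⁻¹]
      group
    have hE : (⟨auxE r (↑(g * g') : H) τ, hA.heMem (g * g').2 h⟩ : ↥(G' ⊓ H0)) =
        ⟨auxE r (↑g) τ, hA.heMem g.2 h⟩ *
          ⟨auxE r (↑g') ((↑g : H)⁻¹ * τ), hA.heMem g'.2 h'⟩ := Subtype.ext he
    unfold auxPsi auxB
    rw [dif_pos h, dif_pos h, dif_pos h', hE, hA.hc, map_mul]
    congr 1
    rw [← MulAut.mul_apply, ← map_mul, ← op_mul]
    refine congrArg (fun z => act' z (c ⟨auxE r (↑g') ((↑g : H)⁻¹ * τ), hA.heMem g'.2 h'⟩))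
      (congrArg op (Subtype.ext ?_))
    show ((((Subgroup.inclusion (inf_le_right : G' ⊓ H0 ≤ H0))
        (⟨auxE r (↑g) τ, hA.heMem g.2 h⟩ : ↥(G' ⊓ H0)))⁻¹ *
        (⟨(r τ)⁻¹ * τ, hA.hr1 τ⟩ : ↥H0) : ↥H0) : H) =
      ((⟨(r ((↑g : H)⁻¹ * τ))⁻¹ * ((↑g : H)⁻¹ * τ), hA.hr1 _⟩ : ↥H0) : H)
    simp only [Subgroup.coe_mul, InvMemClass.coe_inv, Subgroup.coe_inclusion]
    unfold auxE; group
  · have h' : ¬ AuxP H0 G' ((↑g : H)⁻¹ * τ) := by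
      intro hh
      apply h
      have := auxP_mul_left (inv_mem g.2) hh
      simpa using this
    unfold auxPsi auxB
    rw [dif_neg h, dif_neg h, dif_neg h']
    simp

noncomputable def auxF (hA : AuxHyp H0 G' act' r c) (g : ↥G') : TwInd H0 act' :=
  ⟨fun τ => auxPsi hA g τ, fun σ ρ => auxPsi_equiv hA g σ ρ⟩

noncomputable def auxJ (hA : AuxHyp H0 G' act' r c) : ↥G' →* TwInd H0 act' ⋊[twAct H0 act'] H :=
  MonoidHom.mk' (fun g => ⟨auxF hA g, (↑g : H)⟩) (fun g g' => by
    apply SemidirectProduct.ext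
    · show auxF hA (g * g') = auxF hA g * (twAct H0 act' (↑g : H)) (auxF hA g')
      apply Subtype.ext
      funext τ
      exact auxPsi_mul hA g g' τ
    · rfl)

end Aux

/-- let `A` and `H` be finite groups, `H0, G ≤ H`, `G0 = G ⊓ H0`, with `H0`
acting on `A` on the right. Any splitting `i : G0 → A ⋊ G0 ≤ A ⋊ H0` of the projection
`A ⋊ G0 → G0` lifts to an embedding `j : G → A wr_{H0} H` over the inclusion `G ≤ H`
with `j(G0) ⊆ Ind_{H0}^H(A) ⋊ H0` and `π ∘ j = i` on `G0`, where `π` is the Shapiro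
map. -/
theorem exists_embedding_twistedWreath_compatible_with_shapiro
    {H : Type*} [Group H] [Finite H] {A' : Type*} [Group A'] [Finite A']
    (H0 G' : Subgroup H) (act' : H0ᵐᵒᵖ →* MulAut A')
    (i : ↥(G' ⊓ H0) →* A' ⋊[baseAct H0 act'] ↥H0)
    (hi : SemidirectProduct.rightHom.comp i =
      Subgroup.inclusion (inf_le_right : G' ⊓ H0 ≤ H0)) :
    ∃ j : ↥G' →* TwInd H0 act' ⋊[twAct H0 act'] H,
      Function.Injective j ∧
      SemidirectProduct.rightHom.comp j = G'.subtype ∧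
      ∀ σ : ↥(G' ⊓ H0),
        ∃ h : j (Subgroup.inclusion (inf_le_left : G' ⊓ H0 ≤ G') σ) ∈
            Subgroup.comap (SemidirectProduct.rightHom :
              (TwInd H0 act' ⋊[twAct H0 act'] H) →* H) H0,
          shapiro H0 act' ⟨j (Subgroup.inclusion (inf_le_left : G' ⊓ H0 ≤ G') σ), h⟩ =
            i σ := by
  classical
  -- choose coset representatives
  obtain ⟨r, hr1, hr2, hr3, hr4⟩ : ∃ r : H → H, (∀ τ, (r τ)⁻¹ * τ ∈ H0) ∧
      (∀ (τ ρ : H), ρ ∈ H0 → r (τ * ρ) = r τ) ∧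
      (∀ τ, AuxP H0 G' τ → r τ ∈ G') ∧ r 1 = 1 := by
    let rep : H ⧸ H0 → H := fun q =>
      if q = (QuotientGroup.mk (1 : H) : H ⧸ H0) then 1
      else if h : ∃ g : H, g ∈ G' ∧ (QuotientGroup.mk g : H ⧸ H0) = q then h.choose
      else Quotient.out q
    have hmk : ∀ q : H ⧸ H0, (QuotientGroup.mk (rep q) : H ⧸ H0) = q := by
      intro q
      by_cases hq : q = (QuotientGroup.mk (1 : H) : H ⧸ H0)
      · simp [rep, hq]
      · by_cases h : ∃ g : H, g ∈ G' ∧ (QuotientGroup.mk g : H ⧸ H0) = q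
        · simp only [rep, if_neg hq, dif_pos h]
          exact h.choose_spec.2
        · simp only [rep, if_neg hq, dif_neg h]
          exact q.out_eq'
    have hmem : ∀ q : H ⧸ H0, (∃ g : H, g ∈ G' ∧ (QuotientGroup.mk g : H ⧸ H0) = q) →
        rep q ∈ G' := by
      intro q hq'
      by_cases hq : q = (QuotientGroup.mk (1 : H) : H ⧸ H0)
      · simp only [rep, if_pos hq]; exact one_mem G'
      · simp only [rep, if_neg hq, dif_pos hq']
        exact hq'.choose_spec.1
    refine ⟨fun τ => rep (QuotientGroup.mk τ), fun τ => ?_, fun τ ρ hρ => ?_,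
      fun τ hτ => ?_, ?_⟩
    · exact (QuotientGroup.eq).mp (hmk (QuotientGroup.mk τ))
    · show rep (QuotientGroup.mk (τ * ρ)) = rep (QuotientGroup.mk τ)
      rw [QuotientGroup.mk_mul_of_mem τ hρ]
    · apply hmem
      obtain ⟨g, hg, ρ, hρ, hh⟩ := hτ
      exact ⟨g, hg, by rw [← hh]; exact (QuotientGroup.mk_mul_of_mem g hρ).symm⟩
    · simp [rep]
  -- the crossed homomorphism from i
  set c : ↥(G' ⊓ H0) → A' := fun σ => (i σ).left with hcdef
  have hiright : ∀ σ : ↥(G' ⊓ H0), (i σ).right =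
      Subgroup.inclusion (inf_le_right : G' ⊓ H0 ≤ H0) σ := by
    intro σ
    have := DFunLike.congr_fun hi σ
    simpa using this
  have hc : ∀ σ τ : ↥(G' ⊓ H0), c (σ * τ) =
      c σ * act' (op ((Subgroup.inclusion (inf_le_right : G' ⊓ H0 ≤ H0) σ))⁻¹) (c τ) := by
    intro σ τ
    have h1 : (i (σ * τ)).left = (i σ).left *
        (baseAct H0 act') (i σ).right (i τ).left := by
      rw [map_mul]; rfl
    rw [hcdef]
    simp only []
    rw [h1, hiright σ]
    rfl
  have hA : AuxHyp H0 G' act' r c := ⟨hr1, hr2, hr3, hr4, hc⟩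
  have hcomp : SemidirectProduct.rightHom.comp (auxJ hA) = G'.subtype := by
    ext g; rfl
  refine ⟨auxJ hA, ?_, hcomp, ?_⟩
  · intro a b hab
    apply Subtype.ext
    have h1 := congrArg SemidirectProduct.rightHom hab
    have h2 := DFunLike.congr_fun hcomp a
    have h3 := DFunLike.congr_fun hcomp b
    simp only [MonoidHom.comp_apply] at h2 h3
    rw [h2, h3] at h1
    exact h1
  · intro σ
    have hmem : auxJ hA (Subgroup.inclusion (inf_le_left : G' ⊓ H0 ≤ G') σ) ∈
        Subgroup.comap (SemidirectProduct.rightHom :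
          (TwInd H0 act' ⋊[twAct H0 act'] H) →* H) H0 := by
      show SemidirectProduct.rightHom _ ∈ H0
      have := DFunLike.congr_fun hcomp (Subgroup.inclusion inf_le_left σ)
      simp only [MonoidHom.comp_apply] at this
      rw [this]
      exact σ.2.2
    refine ⟨hmem, ?_⟩
    apply SemidirectProduct.ext
    · show (auxF hA (Subgroup.inclusion inf_le_left σ) : H → A') 1 = (i σ).left
      show auxPsi hA (Subgroup.inclusion inf_le_left σ) 1 = (i σ).left
      unfold auxPsi auxB
      have hP1 : AuxP H0 G' (1 : H) := ⟨1, one_mem G', 1, one_mem H0, by simp⟩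
      rw [dif_pos hP1]
      have hone : (⟨(r 1)⁻¹ * 1, hA.hr1 1⟩ : ↥H0) = 1 := by
        apply Subtype.ext
        show (r 1)⁻¹ * 1 = 1
        rw [hr4]; simp
      rw [hone, op_one, map_one]
      have he1 : auxE r (↑(Subgroup.inclusion (inf_le_left : G' ⊓ H0 ≤ G') σ) : H) 1
          = (↑σ : H) := by
        unfold auxE
        have hs : ((↑(Subgroup.inclusion (inf_le_left : G' ⊓ H0 ≤ G') σ) : H))⁻¹ * 1
            = 1 * (↑σ : H)⁻¹ := by simp [Subgroup.coe_inclusion]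
        rw [hs, hr2 1 (↑σ : H)⁻¹ (inv_mem σ.2.2), hr4]
        simp [Subgroup.coe_inclusion]
      have hEσ : (⟨auxE r (↑(Subgroup.inclusion (inf_le_left : G' ⊓ H0 ≤ G') σ) : H) 1,
          hA.heMem (Subgroup.inclusion (inf_le_left : G' ⊓ H0 ≤ G') σ).2 hP1⟩ :
          ↥(G' ⊓ H0)) = σ := Subtype.ext he1
      rw [hEσ]
      rfl
    · show (⟨SemidirectProduct.rightHom _, hmem⟩ : ↥H0) = (i σ).right
      rw [hiright σ]
      apply Subtype.ext
      have h5 := DFunLike.congr_fun hcomp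
        (Subgroup.inclusion (inf_le_left : G' ⊓ H0 ≤ G') σ)
      simp only [MonoidHom.comp_apply] at h5
      exact h5
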